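/- Let f : 2^V → ℝ≥0 be monotone and submodular with f(∅) = 0 on a finite set V. Let S_k be constructed greedily: S_0 = ∅ and S_i = S_{i-1} ∪ {u_i} where u_i maximizes f(S_{i-1} ∪ {u}) - f(S_{i-1}) over u ∈ V. Then f(S_k) ≥ (1 - (1 - 1/k)^k) · max_{|T| ≤ k} f(T) ≥ (1 - 1/e) · max_{|T| ≤ k} f(T). -/

import Mathlib

open Finset

def Submodular11 {V : Type*} [DecidableEq V] (f : Finset V → ℝ) : Prop :=
  ∀ S T : Finset V, ∀ v : V, S ⊆ T → v ∉ T →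
    f (insert v T) - f T ≤ f (insert v S) - f S

def MonotoneSet11 {V : Type*} (f : Finset V → ℝ) : Prop :=
  ∀ S T : Finset V, S ⊆ T → f S ≤ f T

lemma lemA11 {V : Type*} [DecidableEq V] (f : Finset V → ℝ)
    (hmono : MonotoneSet11 f) (hsub : Submodular11 f) (S : Finset V) :
    ∀ T : Finset V, f (S ∪ T) ≤ f S + ∑ v ∈ T, (f (insert v S) - f S) := by
  intro T
  induction T using Finset.induction_on with
  | empty => simp
  | insert _ _ ha ih =>
    rename_i a T'
    rw [Finset.sum_insert ha]
    have h1 : S ∪ insert a T' = insert a (S ∪ T') := Finset.union_insert a S T'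
    by_cases hm : a ∈ S ∪ T'
    · rw [h1, Finset.insert_eq_self.mpr hm]
      have : 0 ≤ f (insert a S) - f S :=
        sub_nonneg.mpr (hmono _ _ (Finset.subset_insert _ _))
      linarith
    · have h2 := hsub S (S ∪ T') a Finset.subset_union_left hm
      rw [h1]; linarith

/-- Nemhauser–Wolsey–Fisher greedy guarantee for monotone submodular
maximization under a cardinality constraint. -/
theorem stmt11 {V : Type*} [Fintype V] [DecidableEq V]
    (f : Finset V → ℝ) (hnn : ∀ S, 0 ≤ f S)
    (hmono : MonotoneSet11 f) (hsub : Submodular11 f) (h0 : f ∅ = 0)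
    (k : ℕ) (hk : 1 ≤ k) (S : ℕ → Finset V) (hS0 : S 0 = ∅)
    (hgreedy : ∀ i < k, ∃ u : V, S (i + 1) = insert u (S i) ∧
      ∀ v : V, f (insert v (S i)) - f (S i) ≤ f (insert u (S i)) - f (S i)) :
    ∀ T : Finset V, T.card ≤ k →
      f (S k) ≥ (1 - (1 - 1 / (k : ℝ)) ^ k) * f T ∧
      f (S k) ≥ (1 - 1 / Real.exp 1) * f T := by
  intro T hT
  have hk' : (0:ℝ) < k := by exact_mod_cast Nat.lt_of_lt_of_le Nat.zero_lt_one hk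
  have hk1 : (1:ℝ) ≤ k := by exact_mod_cast hk
  have hfac : 0 ≤ 1 - 1/(k:ℝ) := by
    rw [sub_nonneg, div_le_one hk']; exact hk1
  have hstep : ∀ i < k, f T - f (S (i+1)) ≤ (1 - 1/(k:ℝ)) * (f T - f (S i)) := by
    intro i hi
    obtain ⟨u, hu, hmax⟩ := hgreedy i hi
    have gain_nonneg : 0 ≤ f (insert u (S i)) - f (S i) :=
      sub_nonneg.mpr (hmono _ _ (Finset.subset_insert _ _))
    have hA := lemA11 f hmono hsub (S i) T
    have hsum : ∑ v ∈ T, (f (insert v (S i)) - f (S i)) ≤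
        (T.card : ℝ) * (f (insert u (S i)) - f (S i)) := by
      calc ∑ v ∈ T, (f (insert v (S i)) - f (S i))
          ≤ ∑ _v ∈ T, (f (insert u (S i)) - f (S i)) :=
            Finset.sum_le_sum (fun v _ => hmax v)
        _ = (T.card : ℝ) * (f (insert u (S i)) - f (S i)) := by
            rw [Finset.sum_const, nsmul_eq_mul]
    have hcard : (T.card : ℝ) * (f (insert u (S i)) - f (S i)) ≤
        (k : ℝ) * (f (insert u (S i)) - f (S i)) :=
      mul_le_mul_of_nonneg_right (by exact_mod_cast hT) gain_nonneg
    have hTle : f T ≤ f (S i ∪ T) := hmono _ _ Finset.subset_union_right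
    have hkey : f T - f (S i) ≤ (k:ℝ) * (f (insert u (S i)) - f (S i)) := by
      linarith
    have h3 : (f T - f (S i))/(k:ℝ) ≤ f (insert u (S i)) - f (S i) :=
      (div_le_iff₀ hk').mpr (by linarith)
    have heq : (1 - 1/(k:ℝ)) * (f T - f (S i))
        = (f T - f (S i)) - (f T - f (S i))/(k:ℝ) := by
      field_simp
    rw [hu, heq]; linarith
  have hind : ∀ i ≤ k, f T - f (S i) ≤ (1 - 1/(k:ℝ))^i * f T := by
    intro i
    induction i with
    | zero => intro _; simp [hS0, h0]
    | succ n ih =>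
      intro hn
      have h1 := ih (Nat.le_of_succ_le hn)
      have h2 := hstep n hn
      calc f T - f (S (n+1)) ≤ (1 - 1/(k:ℝ)) * (f T - f (S n)) := h2
        _ ≤ (1 - 1/(k:ℝ)) * ((1 - 1/(k:ℝ))^n * f T) :=
            mul_le_mul_of_nonneg_left h1 hfac
        _ = (1 - 1/(k:ℝ))^(n+1) * f T := by ring
  have hmain := hind k le_rfl
  have hfirst : f (S k) ≥ (1 - (1 - 1 / (k : ℝ)) ^ k) * f T := by
    have : (1 - (1 - 1/(k:ℝ))^k) * f T = f T - (1 - 1/(k:ℝ))^k * f T := by ring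
    linarith
  refine ⟨hfirst, ?_⟩
  have hexp : (1 - 1/(k:ℝ))^k ≤ 1 / Real.exp 1 := by
    have h1 : 1 - 1/(k:ℝ) ≤ Real.exp (-(1/(k:ℝ))) := by
      have := Real.add_one_le_exp (-(1/(k:ℝ))); linarith
    have h2 : (1 - 1/(k:ℝ))^k ≤ (Real.exp (-(1/(k:ℝ))))^k :=
      pow_le_pow_left₀ hfac h1 k
    have h3 : (Real.exp (-(1/(k:ℝ))))^k = Real.exp ((k:ℝ) * (-(1/(k:ℝ)))) :=
      (Real.exp_nat_mul _ k).symm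
    have h4 : (k:ℝ) * (-(1/(k:ℝ))) = -1 := by field_simp
    rw [h3, h4, Real.exp_neg] at h2
    exact h2.trans_eq (one_div _).symm
  have hpow_nonneg : (0:ℝ) ≤ (1 - 1/(k:ℝ))^k := pow_nonneg hfac k
  have : (1 - 1 / Real.exp 1) * f T ≤ (1 - (1 - 1/(k:ℝ))^k) * f T :=
    mul_le_mul_of_nonneg_right (by linarith) (hnn T)
  linarith
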